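/- Let $Y = \ell_1^N$ over $\mathbb{C}$, let $m \ge 1$, and let $j_1,\dots,j_m \in \{1,\dots,N\}$ be distinct indices. Define the $m$-homogeneous polynomial $Q(x) = \prod_{k=1}^m x_{j_k} + \left(\sum_{k=1}^m x_{j_k}\right)^m$. Then $Q$ attains its norm on the closed unit ball of $Y$ only at the points $\frac{c}{m}\sum_{k=1}^m e_{j_k}$ with $|c| = 1$. -/

import Mathlib

open Finset in
lemma amgm_le {m : ℕ} (hm : 1 ≤ m) (a : Fin m → ℝ) (ha : ∀ k, 0 ≤ a k) :
    ∏ k, a k ≤ ((∑ k, a k) / m) ^ m := by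
  have hm0 : (0:ℝ) < m := by exact_mod_cast hm
  have h1 := Real.geom_mean_le_arith_mean_weighted Finset.univ (fun _ => 1/m) a
    (fun i _ => by positivity)
    (by simp [Finset.card_univ]; field_simp) (fun i _ => ha i)
  have h2 : ∀ k, (a k ^ ((1:ℝ)/m)) ^ (m:ℕ) = a k := by
    intro k
    rw [← Real.rpow_natCast (a k ^ ((1:ℝ)/m)) m, ← Real.rpow_mul (ha k)]
    field_simp
    simp
  calc ∏ k, a k = (∏ k, a k ^ ((1:ℝ)/m)) ^ (m:ℕ) := by
        rw [← Finset.prod_pow]; exact (Finset.prod_congr rfl (fun k _ => h2 k)).symm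
    _ ≤ (∑ k, (1/m) * a k) ^ (m:ℕ) := by
        apply pow_le_pow_left₀ (Finset.prod_nonneg (fun k _ => Real.rpow_nonneg (ha k) _)) h1
    _ = ((∑ k, a k) / m) ^ m := by rw [← Finset.mul_sum]; ring_nf

open Finset in
lemma amgm_eq {m : ℕ} (hm : 1 ≤ m) (a : Fin m → ℝ) (ha : ∀ k, 0 ≤ a k)
    (hs : ∑ k, a k = 1) (hp : ∏ k, a k = (1/m) ^ m) : ∀ k, a k = 1/m := by
  have hm0 : (0:ℝ) < m := by exact_mod_cast hm
  have hpos : ∀ k, 0 < a k := by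
    intro k
    rcases (ha k).lt_or_eq with h | h
    · exact h
    · exfalso
      have : ∏ k, a k = 0 := Finset.prod_eq_zero (Finset.mem_univ k) h.symm
      rw [hp] at this
      have : (0:ℝ) < (1/m)^m := by positivity
      linarith [hp ▸ Finset.prod_eq_zero (Finset.mem_univ k) h.symm]
  have key := strictConcaveOn_log_Ioi.eq_of_map_sum_eq (t := Finset.univ)
    (w := fun _ : Fin m => 1/(m:ℝ)) (p := fun k => a k)
    (fun i _ => by positivity)
    (by simp [Finset.card_univ]; field_simp)
    (fun i _ => Set.mem_Ioi.2 (hpos i))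
    ?_
  · intro k
    -- all a k equal; sum is 1
    have hall : ∀ l : Fin m, a l = a k := fun l => key (Finset.mem_univ l) (Finset.mem_univ k)
    have : ∑ l, a l = m * a k := by
      rw [Finset.sum_congr rfl (fun l _ => hall l)]; simp [Finset.card_univ, mul_comm]
    rw [hs] at this
    field_simp
    linarith
  · -- log (∑ (1/m) • a k) ≤ ∑ (1/m) • log (a k)
    have hL : ∑ k : Fin m, (1/(m:ℝ)) • a k = 1/m := by
      rw [Finset.sum_congr rfl (fun l _ => rfl)]
      simp only [smul_eq_mul, ← Finset.mul_sum, hs, mul_one]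
    have hR : ∑ k : Fin m, (1/(m:ℝ)) • Real.log (a k) = Real.log (1/m) := by
      simp only [smul_eq_mul, ← Finset.mul_sum, ← Real.log_prod (fun k _ => (hpos k).ne'), hp,
        Real.log_pow]
      field_simp
    rw [hL, hR]



/-- on complex `ℓ₁^N`, the `m`-homogeneous polynomial
`Q(x) = ∏ x_{j_k} + (∑ x_{j_k})^m` (distinct indices `j_1,…,j_m`) attains its
norm on the closed unit ball only at the points `(c/m) ∑ e_{j_k}` with `|c| = 1`. -/
theorem stmt_4 (N m : ℕ) (hm : 1 ≤ m) (j : Fin m → Fin N)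
    (hj : Function.Injective j)
    (Q : (Fin N → ℂ) → ℂ)
    (hQ : ∀ x : Fin N → ℂ, Q x = (∏ k, x (j k)) + (∑ k, x (j k)) ^ m)
    (x0 : Fin N → ℂ) (hx0 : ∑ i, ‖x0 i‖ ≤ 1)
    (hatt : ∀ x : Fin N → ℂ, (∑ i, ‖x i‖ ≤ 1) → ‖Q x‖ ≤ ‖Q x0‖) :
    ∃ c : ℂ, ‖c‖ = 1 ∧ x0 = (c / (m : ℂ)) • ∑ k, (Pi.single (j k) (1 : ℂ) : Fin N → ℂ) := by
  classical
  have hm0 : (0:ℝ) < m := by exact_mod_cast hm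
  set E : Fin N → ℂ := ∑ k, (Pi.single (j k) (1 : ℂ) : Fin N → ℂ) with hE
  have hEapp : ∀ i, E i = ∑ l, (Pi.single (j l) (1:ℂ) : Fin N → ℂ) i := by
    intro i; rw [hE]; exact Finset.sum_apply _ _ _
  have hEj : ∀ k, E (j k) = 1 := by
    intro k
    rw [hEapp]
    simp [Pi.single_apply, hj.eq_iff]
  have hEo : ∀ i, i ∉ Set.range j → E i = 0 := by
    intro i hi
    rw [hEapp]
    exact Finset.sum_eq_zero fun k _ => Pi.single_eq_of_ne (fun h => hi ⟨k, h.symm⟩) 1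
  -- sum of norms of a scalar multiple of E
  have hnormsum : ∀ t : ℂ, ∑ i, ‖(t • E) i‖ = m * ‖t‖ := by
    intro t
    have h1 : ∑ i, ‖(t • E) i‖ = ∑ i ∈ Finset.image j Finset.univ, ‖(t • E) i‖ := by
      symm
      apply Finset.sum_subset (Finset.subset_univ _)
      intro i _ hi
      have hir : i ∉ Set.range j := by
        intro ⟨k, hk⟩
        exact hi (Finset.mem_image.2 ⟨k, Finset.mem_univ k, hk⟩)
      simp [Pi.smul_apply, hEo i hir]
    rw [h1, Finset.sum_image (fun a _ b _ h => hj h)]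
    simp [hEj, Finset.card_univ, mul_comm]
  -- lower bound on ‖Q x0‖ from the test point
  have htest : (1/m:ℝ)^m + 1 ≤ ‖Q x0‖ := by
    have h1 : ∑ i, ‖(((1:ℂ)/m) • E) i‖ ≤ 1 := by
      rw [hnormsum]
      have hn : ‖(1:ℂ)/(m:ℂ)‖ = 1/m := by
        rw [norm_div, norm_one, RCLike.norm_natCast]
      rw [hn, mul_one_div, div_self hm0.ne']
    have h2 := hatt _ h1
    have h3 : Q (((1:ℂ)/m) • E) = ((1/m:ℝ)^m + 1 : ℝ) := by
      rw [hQ]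
      have hval : ∀ k, (((1:ℂ)/m) • E) (j k) = 1/m := by
        intro k; simp [Pi.smul_apply, hEj k]
      rw [Finset.prod_congr rfl (fun k _ => hval k), Finset.sum_congr rfl (fun k _ => hval k)]
      simp [Finset.card_univ]
      push_cast
      have hmC : (m:ℂ) ≠ 0 := by exact_mod_cast hm0.ne'
      field_simp
      simp
    rw [h3] at h2
    have h4 : ‖(((1/m:ℝ)^m + 1 : ℝ) : ℂ)‖ = (1/m:ℝ)^m + 1 := by
      rw [Complex.norm_real, Real.norm_eq_abs, abs_of_nonneg (by positivity)]
    linarith [h4 ▸ h2]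
  -- notation
  set z : Fin m → ℂ := fun k => x0 (j k) with hz
  set a : Fin m → ℝ := fun k => ‖z k‖ with ha
  set s : ℝ := ∑ k, a k with hs
  set T : ℂ := ∑ k, z k with hT
  have ha0 : ∀ k, 0 ≤ a k := fun k => norm_nonneg _
  have hs0 : 0 ≤ s := Finset.sum_nonneg fun k _ => ha0 k
  -- subsum bound
  have hssub : s ≤ 1 := by
    have h1 : s = ∑ i ∈ Finset.image j Finset.univ, ‖x0 i‖ := by
      rw [hs, Finset.sum_image (fun a _ b _ h => hj h)]
    have h2 : ∑ i ∈ Finset.image j Finset.univ, ‖x0 i‖ ≤ ∑ i, ‖x0 i‖ :=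
      Finset.sum_le_sum_of_subset_of_nonneg (Finset.subset_univ _)
        (fun i _ _ => norm_nonneg _)
    linarith
  -- upper bound
  have hQub : ‖Q x0‖ ≤ (∏ k, a k) + ‖T‖^m := by
    rw [hQ]
    calc ‖(∏ k, z k) + T ^ m‖ ≤ ‖∏ k, z k‖ + ‖T ^ m‖ := norm_add_le _ _
      _ = (∏ k, a k) + ‖T‖^m := by rw [norm_prod, norm_pow]
  have hTs : ‖T‖ ≤ s := norm_sum_le _ _
  have hamgm : ∏ k, a k ≤ (s/m)^m := amgm_le hm a ha0
  -- s = 1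
  have hs1 : s = 1 := by
    by_contra h
    have hslt : s < 1 := lt_of_le_of_ne hssub h
    have h1 : ‖T‖^m ≤ s^m := pow_le_pow_left₀ (norm_nonneg _) hTs m
    have h2 : s^m < 1 := pow_lt_one₀ hs0 hslt (by omega)
    have h3 : (s/m)^m ≤ ((1:ℝ)/m)^m := by gcongr
    linarith
  have hamgm1 : ∏ k, a k ≤ (1/m:ℝ)^m := by
    have := hamgm; rw [hs1] at this; exact this
  -- ‖T‖ = 1
  have hT1 : ‖T‖ = 1 := by
    have h0 : ‖T‖ ≤ 1 := hs1 ▸ hTs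
    by_contra h
    have hlt : ‖T‖ < 1 := lt_of_le_of_ne h0 h
    have h1 : ‖T‖^m < 1 := pow_lt_one₀ (norm_nonneg _) hlt (by omega)
    linarith
  -- product equality
  have hProd : ∏ k, a k = (1/m:ℝ)^m := by
    have h2 : ‖T‖^m = 1 := by rw [hT1, one_pow]
    rw [h2] at hQub
    linarith
  -- all a k = 1/m
  have hak : ∀ k, a k = 1/m := amgm_eq hm a ha0 (by rw [← hs]; exact hs1) hProd
  -- phases
  refine ⟨T, hT1, ?_⟩
  have hre : ∀ k, ((starRingEnd ℂ) T * z k).re ≤ a k := by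
    intro k
    calc ((starRingEnd ℂ) T * z k).re ≤ ‖(starRingEnd ℂ) T * z k‖ := Complex.re_le_norm _
      _ = ‖T‖ * ‖z k‖ := by rw [norm_mul, RCLike.norm_conj]
      _ = a k := by rw [hT1, one_mul]
  have hresum : ∑ k, ((starRingEnd ℂ) T * z k).re = s := by
    have h1 : ∑ k, (starRingEnd ℂ) T * z k = (starRingEnd ℂ) T * T := by
      rw [← Finset.mul_sum]
    have h2 : ((starRingEnd ℂ) T * T).re = ‖T‖^2 := by
      rw [mul_comm, Complex.mul_conj, Complex.ofReal_re, Complex.normSq_eq_norm_sq]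
    calc ∑ k, ((starRingEnd ℂ) T * z k).re = (∑ k, (starRingEnd ℂ) T * z k).re :=
          (Complex.re_sum _ _).symm
      _ = ‖T‖^2 := by rw [h1, h2]
      _ = s := by rw [hT1, hs1]; norm_num
  have hreeq : ∀ k, ((starRingEnd ℂ) T * z k).re = a k := by
    have h := (Finset.sum_eq_sum_iff_of_le (fun k _ => hre k)).1 (by rw [hresum, hs])
    intro k; exact h k (Finset.mem_univ k)
  have hzk : ∀ k, z k = T / m := by
    intro k
    set w : ℂ := (starRingEnd ℂ) T * z k with hw
    have hwnorm : ‖w‖ = a k := by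
      rw [hw, norm_mul, RCLike.norm_conj, hT1, one_mul]
    have hwre : w.re = a k := hreeq k
    have hwim : w.im = 0 := by
      have h1 : w.re^2 + w.im^2 = ‖w‖^2 := by
        rw [Complex.sq_norm, Complex.normSq_apply]; ring
      rw [hwnorm, hwre] at h1
      nlinarith
    have hw_eq : w = ((a k : ℝ) : ℂ) := by
      apply Complex.ext
      · simpa using hwre
      · simpa using hwim
    have hTT : T * (starRingEnd ℂ) T = 1 := by
      have hns : Complex.normSq T = 1 := by
        rw [Complex.normSq_eq_norm_sq, hT1, one_pow]
      rw [Complex.mul_conj, hns, Complex.ofReal_one]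
    have hmC : (m:ℂ) ≠ 0 := by exact_mod_cast hm0.ne'
    calc z k = T * (starRingEnd ℂ) T * z k := by rw [hTT, one_mul]
      _ = T * w := by rw [hw]; ring
      _ = T * ((a k : ℝ) : ℂ) := by rw [hw_eq]
      _ = T / m := by rw [hak k]; push_cast; field_simp
  -- outside range: zero
  have hout : ∀ i, i ∉ Set.range j → x0 i = 0 := by
    intro i hi
    have h1 : ∑ i ∈ Finset.image j Finset.univ, ‖x0 i‖ = 1 := by
      rw [Finset.sum_image (fun a _ b _ h => hj h)]
      rw [← hs1, hs]
    have h2 : ∑ i ∈ Finset.univ \ Finset.image j Finset.univ, ‖x0 i‖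
        + ∑ i ∈ Finset.image j Finset.univ, ‖x0 i‖ = ∑ i, ‖x0 i‖ :=
      Finset.sum_sdiff (Finset.subset_univ _)
    have h3 : ∑ i ∈ Finset.univ \ Finset.image j Finset.univ, ‖x0 i‖ ≤ 0 := by
      rw [h1] at h2; linarith
    have h4 := Finset.sum_eq_zero_iff_of_nonneg
      (fun i (_ : i ∈ Finset.univ \ Finset.image j Finset.univ) => norm_nonneg (x0 i)) |>.1
      (le_antisymm h3 (Finset.sum_nonneg fun i _ => norm_nonneg _))
    have hi' : i ∈ Finset.univ \ Finset.image j Finset.univ := by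
      simp only [Finset.mem_sdiff, Finset.mem_univ, true_and, Finset.mem_image,
        not_exists]
      intro k hk
      exact hi ⟨k, hk⟩
    exact norm_eq_zero.1 (h4 i hi')
  -- conclusion
  funext i
  by_cases hi : i ∈ Set.range j
  · obtain ⟨k, rfl⟩ := hi
    have hx : x0 (j k) = T / m := hzk k
    simp only [Pi.smul_apply, smul_eq_mul]
    rw [hEj k, hx, mul_one]
  · simp only [Pi.smul_apply, smul_eq_mul]
    rw [hEo i hi, hout i hi, mul_zero]
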